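/- Let h : [0,1) → ℝ be a nonnegative C² function with h(0)=1, h'(0)=0, satisfying h''(x) ≤ (2a/(1-x²)) h'(x) + (b/(1-x²)²) h(x) for all x ∈ [0,1), where a,b > 0 are constants. Then with c = √(1+b+a²), for all x ∈ [0,1): h'(x) ≤ ((a+c)/(1-x²)) h(x). -/

import Mathlib

theorem stmt_4 (a b : ℝ) (ha : 0 < a) (hb : 0 < b)
    (h h' h'' : ℝ → ℝ)
    (hpos : ∀ x ∈ Set.Ico (0 : ℝ) 1, 0 ≤ h x)
    (hd1 : ∀ x ∈ Set.Ico (0 : ℝ) 1, HasDerivAt h (h' x) x)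
    (hd2 : ∀ x ∈ Set.Ico (0 : ℝ) 1, HasDerivAt h' (h'' x) x)
    (hc2 : ContinuousOn h'' (Set.Ico (0 : ℝ) 1))
    (h0 : h 0 = 1) (h0' : h' 0 = 0)
    (hineq : ∀ x ∈ Set.Ico (0 : ℝ) 1,
      h'' x ≤ (2 * a / (1 - x ^ 2)) * h' x + (b / (1 - x ^ 2) ^ 2) * h x) :
    ∀ x ∈ Set.Ico (0 : ℝ) 1,
      h' x ≤ ((a + Real.sqrt (1 + b + a ^ 2)) / (1 - x ^ 2)) * h x := by
  set c := Real.sqrt (1 + b + a ^ 2) with hcdef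
  have hcsq : c ^ 2 = 1 + b + a ^ 2 := Real.sq_sqrt (by nlinarith)
  have hcpos : 0 < c := Real.sqrt_pos.2 (by nlinarith)
  have hs : ∀ x ∈ Set.Ico (0 : ℝ) 1, 0 < 1 - x ^ 2 := by
    rintro x ⟨hx0, hx1⟩; nlinarith
  set E : ℝ → ℝ := fun x => Real.exp ((c - a) / 2 * Real.log ((1 + x) / (1 - x))) with hEdef
  set ψ : ℝ → ℝ := fun x => (h' x - (a + c) / (1 - x ^ 2) * h x) * E x with hψdef
  set D : ℝ → ℝ := fun x =>
    ((h'' x - ((a + c) * (2 * x) / (1 - x ^ 2) ^ 2 * h x + (a + c) / (1 - x ^ 2) * h' x))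
      + (h' x - (a + c) / (1 - x ^ 2) * h x) * ((c - a) / (1 - x ^ 2))) * E x with hDdef
  have hEpos : ∀ x, 0 < E x := fun x => Real.exp_pos _
  have hψderiv : ∀ x ∈ Set.Ico (0 : ℝ) 1, HasDerivAt ψ (D x) x := by
    rintro x hx
    have hx0 := hx.1
    have hx1 := hx.2
    have hsx := hs x hx
    have h1x : (0:ℝ) < 1 - x := by linarith
    have h1x' : (0:ℝ) < 1 + x := by linarith
    have hnum : HasDerivAt (fun y : ℝ => (1 + y) / (1 - y)) (2 / (1 - x) ^ 2) x := by
      have h1 : HasDerivAt (fun y : ℝ => 1 + y) 1 x := by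
        simpa using (hasDerivAt_id x).const_add (1:ℝ)
      have h2 : HasDerivAt (fun y : ℝ => 1 - y) (-1) x := by
        simpa using (hasDerivAt_id x).const_sub (1:ℝ)
      have := h1.div h2 h1x.ne'
      convert this using 1
      rfl; rfl; rfl
      field_simp
      ring
    have hL : HasDerivAt (fun y : ℝ => Real.log ((1 + y) / (1 - y))) (2 / (1 - x ^ 2)) x := by
      have := hnum.log (by positivity)
      convert this using 1
      field_simp
      ring
    have hE' : HasDerivAt E ((c - a) / (1 - x ^ 2) * E x) x := by
      have := (hL.const_mul ((c - a) / 2)).exp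
      convert this using 1
      rw [hEdef]
      field_simp
    have hk : HasDerivAt (fun y : ℝ => (a + c) / (1 - y ^ 2))
        ((a + c) * (2 * x) / (1 - x ^ 2) ^ 2) x := by
      have hden : HasDerivAt (fun y : ℝ => 1 - y ^ 2) (-(2 * x)) x := by
        have := (hasDerivAt_pow 2 x).const_sub (1:ℝ)
        simpa using this
      have := (hasDerivAt_const x (a + c)).div hden hsx.ne'
      convert this using 1
      rfl; rfl; rfl
      field_simp
      ring
    have hφ : HasDerivAt (fun y => h' y - (a + c) / (1 - y ^ 2) * h y)
        (h'' x - ((a + c) * (2 * x) / (1 - x ^ 2) ^ 2 * h x + (a + c) / (1 - x ^ 2) * h' x)) x := by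
      have := (hd2 x hx).sub (hk.mul (hd1 x hx))
      convert this using 2
      rfl; rfl; rfl
    have := hφ.mul hE'
    convert this using 1
    rfl; rfl; rfl
    simp only [hDdef]
    ring
  have hDle : ∀ x ∈ Set.Ico (0 : ℝ) 1, D x ≤ 0 := by
    rintro x hx
    have hx0 := hx.1
    have hsx := hs x hx
    have hh := hpos x hx
    have hin := hineq x hx
    have hb1 : (1 - x ^ 2) ^ 2 * h'' x ≤ 2 * a * (1 - x ^ 2) * h' x + b * h x := by
      have h2 : (1 - x ^ 2) ^ 2 * h'' x ≤
          (1 - x ^ 2) ^ 2 * ((2 * a / (1 - x ^ 2)) * h' x + (b / (1 - x ^ 2) ^ 2) * h x) :=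
        mul_le_mul_of_nonneg_left hin (by positivity)
      calc (1 - x ^ 2) ^ 2 * h'' x ≤ _ := h2
        _ = 2 * a * (1 - x ^ 2) * h' x + b * h x := by field_simp
    have hbr : (h'' x - ((a + c) * (2 * x) / (1 - x ^ 2) ^ 2 * h x + (a + c) / (1 - x ^ 2) * h' x))
        + (h' x - (a + c) / (1 - x ^ 2) * h x) * ((c - a) / (1 - x ^ 2)) ≤ 0 := by
      have hkey : (h'' x - ((a + c) * (2 * x) / (1 - x ^ 2) ^ 2 * h x
            + (a + c) / (1 - x ^ 2) * h' x))
          + (h' x - (a + c) / (1 - x ^ 2) * h x) * ((c - a) / (1 - x ^ 2))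
          = ((1 - x ^ 2) ^ 2 * h'' x - 2 * a * (1 - x ^ 2) * h' x
              - (2 * x * (a + c) + (c ^ 2 - a ^ 2)) * h x) / (1 - x ^ 2) ^ 2 := by
        field_simp
        ring
      rw [hkey]
      apply div_nonpos_of_nonpos_of_nonneg _ (by positivity)
      have hxh : 0 ≤ 2 * x * (a + c) * h x :=
        mul_nonneg (mul_nonneg (by linarith) (by linarith)) hh
      nlinarith [hb1]
    have := mul_le_mul_of_nonneg_right hbr (hEpos x).le
    simpa [hDdef] using this
  have hcont : ContinuousOn ψ (Set.Ico 0 1) := fun x hx =>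
    (hψderiv x hx).continuousAt.continuousWithinAt
  have hanti : AntitoneOn ψ (Set.Ico 0 1) := by
    apply antitoneOn_of_deriv_nonpos (convex_Ico 0 1) hcont
    · intro x hx
      rw [interior_Ico] at hx
      exact (hψderiv x (Set.mem_Ico_of_Ioo hx)).differentiableAt.differentiableWithinAt
    · intro x hx
      rw [interior_Ico] at hx
      rw [(hψderiv x (Set.mem_Ico_of_Ioo hx)).deriv]
      exact hDle x (Set.mem_Ico_of_Ioo hx)
  rintro x hx
  have h0mem : (0:ℝ) ∈ Set.Ico (0:ℝ) 1 := ⟨le_refl _, one_pos⟩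
  have hψ0 : ψ 0 = -(a + c) := by
    simp [hψdef, hEdef, h0, h0']
  have hψx : ψ x ≤ 0 := by
    have := hanti h0mem hx hx.1
    rw [hψ0] at this
    linarith
  have hφle : h' x - (a + c) / (1 - x ^ 2) * h x ≤ 0 := by
    have h2 : (h' x - (a + c) / (1 - x ^ 2) * h x) * E x ≤ 0 * E x := by
      simpa [hψdef] using hψx
    exact le_of_mul_le_mul_right h2 (hEpos x)
  linarith
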